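/- Suppose f: [0,∞) → (0,∞) is continuous with f(x) ~ x^β (log x)^α as x → ∞, where β ∈ (0,1), α ∈ ℝ. Let F(x) = ∫₁ˣ du/f(u). Then F(x) ~ (1/(1−β)) x^{1−β} (log x)^{−α} as x → ∞, and F⁻¹(y) ~ (1−β)^{(1−α)/(1−β)} (log y)^{α/(1−β)} y^{1/(1−β)} as y → ∞. -/

import Mathlib

open Filter Real Set MeasureTheory Asymptotics intervalIntegral

lemma integ_compare (h₁ h₂ : ℝ → ℝ) (a : ℝ)
    (int1 : ∀ x ≥ a, IntervalIntegrable h₁ volume a x)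
    (int2 : ∀ x ≥ a, IntervalIntegrable h₂ volume a x)
    (hpos : ∀ u ≥ a, 0 ≤ h₂ u)
    (hlo : (fun u => h₁ u - h₂ u) =o[atTop] h₂)
    (htop : Tendsto (fun x => ∫ u in a..x, h₂ u) atTop atTop) :
    (fun x => (∫ u in a..x, h₁ u) - ∫ u in a..x, h₂ u)
      =o[atTop] fun x => ∫ u in a..x, h₂ u := by
  rw [Asymptotics.isLittleO_iff]
  intro c hc
  have hc2 : (0:ℝ) < c / 2 := by linarith
  obtain ⟨X, hX⟩ := eventually_atTop.1 ((hlo.def hc2).and (eventually_ge_atTop a))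
  have hXa : X ≥ a := (hX X le_rfl).2
  set K : ℝ := |(∫ u in a..X, h₁ u) - ∫ u in a..X, h₂ u| with hK
  filter_upwards [eventually_ge_atTop X, htop.eventually_ge_atTop (2 * K / c),
    htop.eventually_ge_atTop 0] with x hxX hxK hx0
  have hxa : a ≤ x := hXa.trans hxX
  have hsub : Set.uIcc X x ⊆ Set.uIcc a x := by
    rw [Set.uIcc_of_le hxX, Set.uIcc_of_le hxa]
    exact Set.Icc_subset_Icc hXa le_rfl
  have i1 : IntervalIntegrable h₁ volume a x := int1 x hxa
  have i2 : IntervalIntegrable h₂ volume a x := int2 x hxa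
  have i1' : IntervalIntegrable h₁ volume X x := i1.mono_set hsub
  have i2' : IntervalIntegrable h₂ volume X x := i2.mono_set hsub
  have split1 : (∫ u in a..x, h₁ u) = (∫ u in a..X, h₁ u) + ∫ u in X..x, h₁ u :=
    (intervalIntegral.integral_add_adjacent_intervals (int1 X hXa) i1').symm
  have split2 : (∫ u in a..x, h₂ u) = (∫ u in a..X, h₂ u) + ∫ u in X..x, h₂ u :=
    (intervalIntegral.integral_add_adjacent_intervals (int2 X hXa) i2').symm
  have hmid : |(∫ u in X..x, h₁ u) - ∫ u in X..x, h₂ u| ≤ c / 2 * ∫ u in a..x, h₂ u := by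
    have e1 : (∫ u in X..x, h₁ u) - ∫ u in X..x, h₂ u = ∫ u in X..x, (h₁ u - h₂ u) :=
      (intervalIntegral.integral_sub i1' i2').symm
    rw [e1]
    calc |∫ u in X..x, (h₁ u - h₂ u)| ≤ ∫ u in X..x, |h₁ u - h₂ u| :=
            intervalIntegral.abs_integral_le_integral_abs hxX
      _ ≤ ∫ u in X..x, c / 2 * h₂ u := by
          apply intervalIntegral.integral_mono_on hxX (i1'.sub i2').abs
            (i2'.const_mul (c/2))
          intro u hu
          simpa [Real.norm_eq_abs, abs_of_nonneg (hpos u (hXa.trans hu.1))] using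
            (hX u hu.1).1
      _ = c / 2 * ∫ u in X..x, h₂ u := intervalIntegral.integral_const_mul _ _
      _ ≤ c / 2 * ∫ u in a..x, h₂ u := by
          apply mul_le_mul_of_nonneg_left _ hc2.le
          rw [split2]
          have : 0 ≤ ∫ u in a..X, h₂ u :=
            intervalIntegral.integral_nonneg hXa (fun u hu => hpos u hu.1)
          linarith
  have hKb : K ≤ c / 2 * ∫ u in a..x, h₂ u := by
    rw [div_le_iff₀ hc] at hxK
    nlinarith [hxK]
  calc ‖(∫ u in a..x, h₁ u) - ∫ u in a..x, h₂ u‖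
      = |((∫ u in a..X, h₁ u) - ∫ u in a..X, h₂ u) +
          ((∫ u in X..x, h₁ u) - ∫ u in X..x, h₂ u)| := by
        rw [Real.norm_eq_abs, split1, split2]; ring_nf
    _ ≤ K + |(∫ u in X..x, h₁ u) - ∫ u in X..x, h₂ u| := abs_add_le _ _
    _ ≤ c / 2 * (∫ u in a..x, h₂ u) + c / 2 * (∫ u in a..x, h₂ u) := add_le_add hKb hmid
    _ = c * ∫ u in a..x, h₂ u := by ring
    _ ≤ c * ‖∫ u in a..x, h₂ u‖ := by
        apply mul_le_mul_of_nonneg_left (le_abs_self _) hc.le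

lemma gderiv (α β : ℝ) (hβ : β ∈ Set.Ioo (0:ℝ) 1) {x : ℝ} (hx : 1 < x) :
    HasDerivAt (fun x => (1/(1-β)) * x ^ (1-β) * Real.log x ^ (-α))
      (x ^ (-β) * Real.log x ^ (-α) * (1 - α * (1/(1-β)) / Real.log x)) x := by
  have h1β : (0:ℝ) < 1 - β := by linarith [hβ.2]
  have hx0 : (0:ℝ) < x := lt_trans one_pos hx
  have hL : 0 < Real.log x := Real.log_pos hx
  have h1 : HasDerivAt (fun x : ℝ => (1/(1-β)) * x ^ (1-β))
      ((1/(1-β)) * ((1-β) * x ^ (1-β-1))) x :=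
    (Real.hasDerivAt_rpow_const (Or.inl hx0.ne')).const_mul _
  have h2 : HasDerivAt (fun x : ℝ => Real.log x ^ (-α))
      (x⁻¹ * (-α) * Real.log x ^ (-α-1)) x :=
    (Real.hasDerivAt_log hx0.ne').rpow_const (Or.inl hL.ne')
  have := h1.mul h2
  refine HasDerivAt.congr_deriv this ?_
  have e1 : x ^ (1-β-1) = x ^ (-β) := by rw [show (1:ℝ)-β-1 = -β by ring]
  have e2 : Real.log x ^ (-α-1) = Real.log x ^ (-α) / Real.log x := by
    rw [show -α-1 = -α - 1 by ring, Real.rpow_sub hL, Real.rpow_one]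
  have e3 : x ^ (1-β) = x ^ (-β) * x := by
    rw [show (1:ℝ)-β = -β+1 by ring, Real.rpow_add_one hx0.ne']
  rw [e1, e2, e3]
  field_simp
  ring

lemma gtop (α β : ℝ) (hβ : β ∈ Set.Ioo (0:ℝ) 1) :
    Tendsto (fun x => (1/(1-β)) * x ^ (1-β) * Real.log x ^ (-α)) atTop atTop := by
  have h1β : (0:ℝ) < 1 - β := by linarith [hβ.2]
  set r : ℝ := (1-β)/2 with hr
  have hr0 : 0 < r := by positivity
  have hlo : (fun x => Real.log x ^ α) =o[atTop] fun x => x ^ r :=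
    isLittleO_log_rpow_rpow_atTop α hr0
  have hdiv : Tendsto (fun x => Real.log x ^ α / x ^ r) atTop (nhds 0) :=
    hlo.tendsto_div_nhds_zero
  have hpos : ∀ᶠ x in atTop, 0 < Real.log x ^ α / x ^ r := by
    filter_upwards [eventually_gt_atTop 1] with x hx
    have hx0 : (0:ℝ) < x := lt_trans one_pos hx
    have hL : 0 < Real.log x := Real.log_pos hx
    positivity
  have hinv : Tendsto (fun x => (Real.log x ^ α / x ^ r)⁻¹) atTop atTop :=
    tendsto_inv_nhdsGT_zero.comp (tendsto_nhdsWithin_iff.2 ⟨hdiv, hpos⟩)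
  have hxr : Tendsto (fun x : ℝ => x ^ r) atTop atTop := tendsto_rpow_atTop hr0
  have hmul : Tendsto (fun x : ℝ => x ^ r * (Real.log x ^ α / x ^ r)⁻¹) atTop atTop :=
    hxr.atTop_mul_atTop₀ hinv
  have hc : (0:ℝ) < 1/(1-β) := by positivity
  have := hmul.const_mul_atTop hc
  apply this.congr'
  filter_upwards [eventually_gt_atTop 1] with x hx
  have hx0 : (0:ℝ) < x := lt_trans one_pos hx
  have hL : 0 < Real.log x := Real.log_pos hx
  have : x ^ (1-β) = x ^ r * x ^ r := by
    rw [← Real.rpow_add hx0]; congr 1; rw [hr]; ring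
  rw [this, Real.rpow_neg hL.le, inv_div]
  have hxrp : (0:ℝ) < x ^ r := Real.rpow_pos_of_pos hx0 r
  have hLa : (0:ℝ) < Real.log x ^ α := Real.rpow_pos_of_pos hL α
  field_simp

lemma part1 (f F : ℝ → ℝ) (α β : ℝ)
    (hβ : β ∈ Set.Ioo (0:ℝ) 1)
    (hf_cont : ContinuousOn f (Set.Ici 0))
    (hf_pos : ∀ x ∈ Set.Ici (0:ℝ), 0 < f x)
    (hasym : Tendsto (fun x => f x / (x ^ β * Real.log x ^ α)) atTop (nhds 1))
    (hF : ∀ x > (0:ℝ), F x = ∫ u in (1:ℝ)..x, 1 / f u) :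
    F ~[atTop] fun x => (1/(1-β)) * x ^ (1-β) * Real.log x ^ (-α) := by
  have h1β : (0:ℝ) < 1 - β := by linarith [hβ.2]
  set c : ℝ := 1/(1-β) with hc
  set g : ℝ → ℝ := fun x => c * x ^ (1-β) * Real.log x ^ (-α) with hg
  set G' : ℝ → ℝ := fun x => x ^ (-β) * Real.log x ^ (-α) * (1 - α * c / Real.log x)
    with hG'
  set X₀ : ℝ := max 2 (Real.exp (1 + |α * c|)) with hX₀
  have hX₀2 : (2:ℝ) ≤ X₀ := le_max_left _ _
  have hX₀1 : (1:ℝ) < X₀ := by linarith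
  -- log bound on [X₀, ∞)
  have hlogbig : ∀ u ≥ X₀, 1 + |α * c| ≤ Real.log u := by
    intro u hu
    have : Real.exp (1 + |α * c|) ≤ u := le_trans (le_max_right _ _) hu
    calc 1 + |α * c| = Real.log (Real.exp (1 + |α * c|)) := (Real.log_exp _).symm
      _ ≤ Real.log u := Real.log_le_log (Real.exp_pos _) this
  have hG'pos : ∀ u ≥ X₀, 0 < G' u := by
    intro u hu
    have hu1 : (1:ℝ) < u := lt_of_lt_of_le hX₀1 hu
    have hu0 : (0:ℝ) < u := lt_trans one_pos hu1
    have hL : 0 < Real.log u := Real.log_pos hu1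
    have hlb := hlogbig u hu
    have hfrac : α * c / Real.log u < 1 := by
      rw [div_lt_one hL]
      calc α * c ≤ |α * c| := le_abs_self _
        _ < 1 + |α * c| := by linarith
        _ ≤ Real.log u := hlb
    have : 0 < 1 - α * c / Real.log u := by linarith
    positivity
  -- continuity of G' away from 1
  have hG'cont : ∀ u : ℝ, 1 < u → ContinuousAt G' u := by
    intro u hu
    have hu0 : (0:ℝ) < u := lt_trans one_pos hu
    have hL : 0 < Real.log u := Real.log_pos hu
    have c1 : ContinuousAt (fun u : ℝ => u ^ (-β)) u :=
      Real.continuousAt_rpow_const u (-β) (Or.inl hu0.ne')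
    have c2 : ContinuousAt (fun u : ℝ => Real.log u ^ (-α)) u :=
      (Real.continuousAt_rpow_const (Real.log u) (-α) (Or.inl hL.ne')).comp
        (Real.continuousAt_log hu0.ne')
    have c3 : ContinuousAt (fun u : ℝ => 1 - α * c / Real.log u) u :=
      continuousAt_const.sub
        (continuousAt_const.div (Real.continuousAt_log hu0.ne') hL.ne')
    exact (c1.mul c2).mul c3
  have intG' : ∀ x ≥ X₀, IntervalIntegrable G' volume X₀ x := by
    intro x hx
    apply ContinuousOn.intervalIntegrable
    intro u hu
    rw [Set.uIcc_of_le hx] at hu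
    exact (hG'cont u (lt_of_lt_of_le hX₀1 hu.1)).continuousWithinAt
  have intf : ∀ a x : ℝ, 1 ≤ a → a ≤ x →
      IntervalIntegrable (fun u => 1 / f u) volume a x := by
    intro a x ha hax
    apply ContinuousOn.intervalIntegrable
    rw [Set.uIcc_of_le hax]
    intro u hu
    have hu0 : (0:ℝ) ≤ u := by linarith [hu.1]
    have hsub : Set.Icc a x ⊆ Set.Ici (0:ℝ) := fun v hv => by
      simp only [Set.mem_Ici]; linarith [hv.1]
    exact continuousWithinAt_const.div ((hf_cont.mono hsub) u hu) (hf_pos u hu0).ne'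
  -- FTC
  have hFTC : ∀ x ≥ X₀, (∫ u in X₀..x, G' u) = g x - g X₀ := by
    intro x hx
    apply intervalIntegral.integral_eq_sub_of_hasDerivAt
    · intro u hu
      rw [Set.uIcc_of_le hx] at hu
      exact gderiv α β hβ (lt_of_lt_of_le hX₀1 hu.1)
    · exact intG' x hx
  have htop : Tendsto (fun x => ∫ u in X₀..x, G' u) atTop atTop := by
    apply Tendsto.congr' _ (tendsto_atTop_add_const_right atTop (-(g X₀)) (gtop α β hβ))
    filter_upwards [eventually_ge_atTop X₀] with x hx
    rw [hFTC x hx]; ring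
  -- asymptotic equivalence of 1/f and G'
  have hne : ∀ᶠ x : ℝ in atTop, x ^ β * Real.log x ^ α ≠ 0 := by
    filter_upwards [eventually_gt_atTop 1] with x hx
    have hx0 : (0:ℝ) < x := lt_trans one_pos hx
    have hL : 0 < Real.log x := Real.log_pos hx
    positivity
  have hfh : f ~[atTop] fun x => x ^ β * Real.log x ^ α :=
    (isEquivalent_iff_tendsto_one hne).2 hasym
  have hinv : (fun x => (f x)⁻¹) ~[atTop] fun x => (x ^ β * Real.log x ^ α)⁻¹ :=
    hfh.inv
  have heq2 : (fun x : ℝ => (x ^ β * Real.log x ^ α)⁻¹)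
      =ᶠ[atTop] fun x => x ^ (-β) * Real.log x ^ (-α) := by
    filter_upwards [eventually_gt_atTop 1] with x hx
    have hx0 : (0:ℝ) < x := lt_trans one_pos hx
    have hL : 0 < Real.log x := Real.log_pos hx
    rw [mul_inv, Real.rpow_neg hx0.le, Real.rpow_neg hL.le]
  have hG'h2 : G' ~[atTop] fun x => x ^ (-β) * Real.log x ^ (-α) := by
    have hne2 : ∀ᶠ x : ℝ in atTop, x ^ (-β) * Real.log x ^ (-α) ≠ 0 := by
      filter_upwards [eventually_gt_atTop 1] with x hx
      have hx0 : (0:ℝ) < x := lt_trans one_pos hx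
      have hL : 0 < Real.log x := Real.log_pos hx
      positivity
    rw [isEquivalent_iff_tendsto_one hne2]
    have hlim : Tendsto (fun x : ℝ => 1 - α * c / Real.log x) atTop (nhds 1) := by
      have : Tendsto (fun x : ℝ => α * c / Real.log x) atTop (nhds 0) :=
        tendsto_const_nhds.div_atTop (Real.tendsto_log_atTop)
      simpa using tendsto_const_nhds.sub this
    apply hlim.congr'
    filter_upwards [eventually_gt_atTop 1] with x hx
    have hx0 : (0:ℝ) < x := lt_trans one_pos hx
    have hL : 0 < Real.log x := Real.log_pos hx
    have hne3 : x ^ (-β) * Real.log x ^ (-α) ≠ 0 := by positivity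
    rw [hG']
    simp only [Pi.div_apply]
    field_simp
  have hequiv : (fun u => 1 / f u) ~[atTop] G' := by
    have e1 : (fun u : ℝ => 1 / f u) = fun u => (f u)⁻¹ := by
      funext u; rw [one_div]
    rw [e1]
    exact (hinv.congr_right heq2).trans hG'h2.symm
  -- apply integral comparison
  have hcomp := integ_compare (fun u => 1 / f u) G' X₀
    (fun x hx => intf X₀ x (le_of_lt hX₀1) hx) intG'
    (fun u hu => (hG'pos u hu).le) hequiv htop
  have hI : (fun x => ∫ u in X₀..x, 1 / f u) ~[atTop] fun x => ∫ u in X₀..x, G' u :=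
    hcomp
  -- ∫ G' ~ g
  have hIg : (fun x => ∫ u in X₀..x, G' u) ~[atTop] g := by
    have h1 : (fun x => g x - g X₀) ~[atTop] g := by
      have : (fun _ : ℝ => -(g X₀)) =o[atTop] g := by
        rw [Asymptotics.isLittleO_const_left]
        right
        exact tendsto_abs_atTop_atTop.comp (gtop α β hβ)
      have h2 := (IsEquivalent.refl (u := g) (l := atTop)).add_isLittleO this
      apply h2.congr_left
      filter_upwards with x
      simp [sub_eq_add_neg]
    apply h1.congr_left
    filter_upwards [eventually_ge_atTop X₀] with x hx
    exact (hFTC x hx).symm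
  -- F ~ ∫ 1/f from X₀
  have hItop : Tendsto (fun x => ∫ u in X₀..x, 1 / f u) atTop atTop :=
    hI.symm.tendsto_atTop htop
  have hFI : F ~[atTop] fun x => ∫ u in X₀..x, 1 / f u := by
    have hconst : (fun _ : ℝ => ∫ u in (1:ℝ)..X₀, 1 / f u)
        =o[atTop] fun x => ∫ u in X₀..x, 1 / f u := by
      rw [Asymptotics.isLittleO_const_left]
      right
      exact tendsto_abs_atTop_atTop.comp hItop
    have h2 := (IsEquivalent.refl
      (u := fun x => ∫ u in X₀..x, 1 / f u) (l := atTop)).add_isLittleO hconst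
    apply h2.congr_left
    filter_upwards [eventually_ge_atTop X₀] with x hx
    have hx1 : (1:ℝ) < x := lt_of_lt_of_le hX₀1 hx
    have := intervalIntegral.integral_add_adjacent_intervals
      (intf 1 X₀ le_rfl hX₀1.le) (intf X₀ x hX₀1.le hx)
    rw [hF x (by linarith)]
    simp only [Pi.add_apply]
    rw [← this]
    ring
  exact (hFI.trans hI).trans hIg

lemma part2 (F Finv : ℝ → ℝ) (α β : ℝ) (hβ : β ∈ Set.Ioo (0:ℝ) 1)
    (hFg : Tendsto (fun x => F x / ((1/(1-β)) * x ^ (1-β) * Real.log x ^ (-α)))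
      atTop (nhds 1))
    (hxtop : Tendsto Finv atTop atTop)
    (hFinv_right : ∀ t ≥ (0:ℝ), F (Finv t) = t) :
    Tendsto (fun y => Finv y /
      ((1 - β) ^ ((1 - α) / (1 - β)) * Real.log y ^ (α / (1 - β)) *
        y ^ (1 / (1 - β)))) atTop (nhds 1) := by
  have h1β : (0:ℝ) < 1 - β := by linarith [hβ.2]
  set c : ℝ := 1/(1-β) with hc
  set g : ℝ → ℝ := fun x => c * x ^ (1-β) * Real.log x ^ (-α) with hg
  set a : ℝ := α / (1-β) with ha
  set b : ℝ := 1 / (1-β) with hb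
  set q : ℝ := (1-α) / (1-β) with hq
  set lβ : ℝ := Real.log (1-β) with hlβ
  set D : ℝ → ℝ := fun t => (1-β) ^ q * Real.log t ^ a * t ^ b with hD
  set r : ℝ → ℝ := fun t => t / g (Finv t) with hr
  -- K1
  have K1 : Tendsto r atTop (nhds 1) := by
    have h0 := hFg.comp hxtop
    apply h0.congr'
    filter_upwards [eventually_ge_atTop (0:ℝ)] with t ht
    simp only [Function.comp_apply, hr]
    rw [hFinv_right t ht]
  have hr_pos : ∀ᶠ t in atTop, 0 < r t :=
    K1.eventually (eventually_gt_nhds (by norm_num : (0:ℝ) < 1))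
  have hlogr : Tendsto (fun t => Real.log (r t)) atTop (nhds 0) := by
    have := (Real.continuousAt_log one_ne_zero).tendsto.comp K1
    simpa [Real.log_one, Function.comp_def] using this
  -- key eventual facts
  have key : ∀ᶠ t in atTop,
      Real.log t = Real.log c + (1-β) * Real.log (Finv t)
        - α * Real.log (Real.log (Finv t)) + Real.log (r t)
      ∧ 0 < Real.log t ∧ 0 < Real.log (Finv t) ∧ 0 < Finv t ∧ 0 < t ∧ 0 < r t := by
    filter_upwards [eventually_ge_atTop (2:ℝ), hxtop.eventually_ge_atTop 3, hr_pos]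
      with t ht hx3 hrt
    have ht0 : (0:ℝ) < t := by linarith
    have hlt : 0 < Real.log t := Real.log_pos (by linarith)
    have hx0 : (0:ℝ) < Finv t := by linarith
    have hx1 : (1:ℝ) < Finv t := by linarith
    have hlx : 0 < Real.log (Finv t) := Real.log_pos hx1
    refine ⟨?_, hlt, hlx, hx0, ht0, hrt⟩
    have hc0 : (0:ℝ) < c := by positivity
    have hgx : 0 < g (Finv t) := by
      have h1 : (0:ℝ) < (Finv t) ^ (1-β) := Real.rpow_pos_of_pos hx0 _
      have h2 : (0:ℝ) < Real.log (Finv t) ^ (-α) := Real.rpow_pos_of_pos hlx _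
      positivity
    have hteq : t = g (Finv t) * r t := by
      rw [hr]; field_simp
    conv_lhs => rw [hteq]
    rw [Real.log_mul hgx.ne' hrt.ne']
    have : Real.log (g (Finv t)) = Real.log c + (1-β) * Real.log (Finv t)
        - α * Real.log (Real.log (Finv t)) := by
      rw [hg]
      have h1 : (0:ℝ) < (Finv t) ^ (1-β) := Real.rpow_pos_of_pos hx0 _
      have h2 : (0:ℝ) < Real.log (Finv t) ^ (-α) := Real.rpow_pos_of_pos hlx _
      rw [Real.log_mul (by positivity) h2.ne', Real.log_mul hc0.ne' h1.ne',
        Real.log_rpow hx0, Real.log_rpow hlx]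
      ring
    rw [this]
  -- K3
  have hlxtop : Tendsto (fun t => Real.log (Finv t)) atTop atTop :=
    Real.tendsto_log_atTop.comp hxtop
  have K3 : Tendsto (fun t => Real.log t / Real.log (Finv t)) atTop (nhds (1-β)) := by
    have Ta : Tendsto (fun t => (Real.log c + Real.log (r t)) / Real.log (Finv t))
        atTop (nhds 0) :=
      Tendsto.div_atTop (by simpa using tendsto_const_nhds.add hlogr) hlxtop
    have hφ : Tendsto (fun u : ℝ => Real.log u / u) atTop (nhds 0) :=
      Real.isLittleO_log_id_atTop.tendsto_div_nhds_zero
    have Tb : Tendsto (fun t => α * (Real.log (Real.log (Finv t)) / Real.log (Finv t)))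
        atTop (nhds 0) := by
      have := (hφ.comp hlxtop).const_mul α
      simpa using this
    have Tsum : Tendsto (fun t =>
        (Real.log c + Real.log (r t)) / Real.log (Finv t)
        - α * (Real.log (Real.log (Finv t)) / Real.log (Finv t)) + (1-β))
        atTop (nhds (1-β)) := by
      have := (Ta.sub Tb).add (tendsto_const_nhds (x := (1-β)))
      simpa using this
    apply Tsum.congr'
    filter_upwards [key] with t hk
    obtain ⟨k2, hlt, hlx, hx0, ht0, hrt⟩ := hk
    rw [k2]
    field_simp
    ring
  -- K4
  have K4 : Tendsto (fun t => Real.log (Real.log (Finv t)) - Real.log (Real.log t))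
      atTop (nhds (-lβ)) := by
    have h1 : Tendsto (fun t => Real.log (Real.log t / Real.log (Finv t))) atTop
        (nhds lβ) := (Real.continuousAt_log (by linarith : (1-β) ≠ 0)).tendsto.comp K3
    have h2 := h1.neg
    apply h2.congr'
    filter_upwards [key] with t hk
    obtain ⟨k2, hlt, hlx, hx0, ht0, hrt⟩ := hk
    rw [Real.log_div hlt.ne' hlx.ne']
    ring
  -- K5
  have K5 : Tendsto (fun t => Real.log (Finv t) - Real.log (D t)) atTop (nhds 0) := by
    have base : Tendsto (fun t =>
        a * lβ + a * (Real.log (Real.log (Finv t)) - Real.log (Real.log t))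
          - b * Real.log (r t)) atTop (nhds (a * lβ + a * (-lβ) - b * 0)) :=
      (tendsto_const_nhds.add (K4.const_mul a)).sub (hlogr.const_mul b)
    rw [show a * lβ + a * (-lβ) - b * 0 = 0 by ring] at base
    apply base.congr'
    filter_upwards [key, eventually_gt_atTop 1] with t hk ht1
    obtain ⟨k2, hlt, hlx, hx0, ht0, hrt⟩ := hk
    have hlogD : Real.log (D t) = q * lβ + a * Real.log (Real.log t) + b * Real.log t := by
      rw [hD]
      have h1 : (0:ℝ) < (1-β) ^ q := Real.rpow_pos_of_pos h1β _
      have h2 : (0:ℝ) < Real.log t ^ a := Real.rpow_pos_of_pos hlt _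
      have h3 : (0:ℝ) < t ^ b := Real.rpow_pos_of_pos ht0 _
      rw [Real.log_mul (by positivity) h3.ne', Real.log_mul h1.ne' h2.ne',
        Real.log_rpow h1β, Real.log_rpow hlt, Real.log_rpow ht0]
    have hlogc : Real.log c = -lβ := by
      rw [hc, hb, one_div, Real.log_inv, ← hlβ]
    rw [hlogD, k2, hlogc, ha, hb, hq]
    field_simp
    ring
  -- conclude
  have hfinal : Tendsto (fun t => Real.exp (Real.log (Finv t) - Real.log (D t)))
      atTop (nhds 1) := by
    have := Real.continuous_exp.continuousAt.tendsto.comp K5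
    simpa [Real.exp_zero, Function.comp_def] using this
  apply hfinal.congr'
  filter_upwards [key] with t hk
  obtain ⟨k2, hlt, hlx, hx0, ht0, hrt⟩ := hk
  have hD0 : 0 < D t := by
    have h1 : (0:ℝ) < (1-β) ^ q := Real.rpow_pos_of_pos h1β _
    have h2 : (0:ℝ) < Real.log t ^ a := Real.rpow_pos_of_pos hlt _
    have h3 : (0:ℝ) < t ^ b := Real.rpow_pos_of_pos ht0 _
    rw [hD]; positivity
  rw [Real.exp_sub, Real.exp_log hx0, Real.exp_log hD0]

theorem stmt_15 (f F Finv : ℝ → ℝ) (α β : ℝ)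
    (hβ : β ∈ Set.Ioo (0:ℝ) 1)
    (hf_cont : ContinuousOn f (Set.Ici 0))
    (hf_pos : ∀ x ∈ Set.Ici (0:ℝ), 0 < f x)
    (hasym : Tendsto (fun x => f x / (x ^ β * Real.log x ^ α)) atTop (nhds 1))
    (hF : ∀ x > (0:ℝ), F x = ∫ u in (1:ℝ)..x, 1 / f u)
    (hFinv_right : ∀ t ≥ (0:ℝ), F (Finv t) = t)
    (hFinv_ge : ∀ t ≥ (0:ℝ), 1 ≤ Finv t)
    (hFinv_left : ∀ x ≥ (1:ℝ), Finv (F x) = x) :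
    Tendsto (fun x => F x / ((1 / (1 - β)) * x ^ (1 - β) * Real.log x ^ (-α)))
        atTop (nhds 1) ∧
      Tendsto (fun y =>
          Finv y /
            ((1 - β) ^ ((1 - α) / (1 - β)) * Real.log y ^ (α / (1 - β)) *
              y ^ (1 / (1 - β)))) atTop (nhds 1) := by
  have h1β : (0:ℝ) < 1 - β := by linarith [hβ.2]
  have hequiv := part1 f F α β hβ hf_cont hf_pos hasym hF
  have hgne : ∀ᶠ x : ℝ in atTop, (1/(1-β)) * x ^ (1-β) * Real.log x ^ (-α) ≠ 0 := by
    filter_upwards [eventually_gt_atTop 1] with x hx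
    have hx0 : (0:ℝ) < x := lt_trans one_pos hx
    have hL : 0 < Real.log x := Real.log_pos hx
    have h1 : (0:ℝ) < x ^ (1-β) := Real.rpow_pos_of_pos hx0 _
    have h2 : (0:ℝ) < Real.log x ^ (-α) := Real.rpow_pos_of_pos hL _
    positivity
  have hFg : Tendsto (fun x => F x / ((1/(1-β)) * x ^ (1-β) * Real.log x ^ (-α)))
      atTop (nhds 1) := (isEquivalent_iff_tendsto_one hgne).1 hequiv
  -- integrability of 1/f
  have intf : ∀ a x : ℝ, 1 ≤ a → a ≤ x →
      IntervalIntegrable (fun u => 1 / f u) volume a x := by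
    intro a x ha hax
    apply ContinuousOn.intervalIntegrable
    rw [Set.uIcc_of_le hax]
    intro u hu
    have hu0 : (0:ℝ) ≤ u := by linarith [hu.1]
    have hsub : Set.Icc a x ⊆ Set.Ici (0:ℝ) := fun v hv => by
      simp only [Set.mem_Ici]; linarith [hv.1]
    exact continuousWithinAt_const.div ((hf_cont.mono hsub) u hu) (hf_pos u hu0).ne'
  -- F is strictly monotone on [1, ∞)
  have hmono : ∀ x y : ℝ, 1 ≤ y → y < x → F y < F x := by
    intro x y hy hyx
    have hy0 : (0:ℝ) < y := by linarith
    have hx0 : (0:ℝ) < x := by linarith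
    rw [hF y hy0, hF x hx0,
      ← intervalIntegral.integral_add_adjacent_intervals (intf 1 y le_rfl hy)
        (intf y x hy hyx.le)]
    have hpos : 0 < ∫ u in y..x, 1 / f u := by
      apply intervalIntegral.integral_pos hyx
      · intro u hu
        have hu0 : (0:ℝ) ≤ u := by linarith [hu.1]
        have hsub : Set.Icc y x ⊆ Set.Ici (0:ℝ) := fun v hv => by
          simp only [Set.mem_Ici]; linarith [hv.1]
        exact continuousWithinAt_const.div ((hf_cont.mono hsub) u hu) (hf_pos u hu0).ne'
      · intro u hu
        have hu0 : (0:ℝ) ≤ u := by linarith [hu.1]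
        have := hf_pos u hu0
        positivity
      · refine ⟨y, ⟨le_rfl, hyx.le⟩, ?_⟩
        have := hf_pos y hy0.le
        positivity
    linarith
  -- Finv tends to atTop
  have hxtop : Tendsto Finv atTop atTop := by
    rw [tendsto_atTop]
    intro M
    set M' : ℝ := max M 1 with hM'
    filter_upwards [eventually_ge_atTop (max 0 (F (M' + 1)))] with t ht
    have ht0 : (0:ℝ) ≤ t := le_trans (le_max_left _ _) ht
    by_contra hcon
    push_neg at hcon
    have h1 : Finv t < M' + 1 := lt_of_lt_of_le hcon (by
      calc M ≤ M' := le_max_left _ _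
        _ ≤ M' + 1 := by linarith)
    have h2 : F (Finv t) < F (M' + 1) := hmono _ _ (hFinv_ge t ht0) h1
    rw [hFinv_right t ht0] at h2
    have h3 : F (M' + 1) ≤ t := le_trans (le_max_right _ _) ht
    linarith
  exact ⟨hFg, part2 F Finv α β hβ hFg hxtop hFinv_right⟩
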